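/- Let T > 0 and 0 < α < λ < 1. Then for every G ≥ 0 and every g : [0,T] → ℝ with g(0) = 0 and |g(t) − g(s)| ≤ G|t − s|^λ for all s, t ∈ [0,T], the function D g defined by D g(t) = g(t)/t^α for t ∈ (0,T] and D g(0) = 0 satisfies |D g(t)| ≤ G t^{λ−α} for all t ∈ (0,T], and |D g(t) − D g(s)| ≤ 2 G (t − s)^{λ−α} for all 0 ≤ s ≤ t ≤ T. -/

import Mathlib

open Set

/-- Bernoulli-type bound: `t ^ α - s ^ α ≤ s ^ (α - 1) * (t - s)` for `0 < s ≤ t`,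
`0 < α ≤ 1`. -/
lemma rpow_sub_rpow_le (α s t : ℝ) (hα : 0 < α) (hα1 : α ≤ 1) (hs : 0 < s)
    (hst : s ≤ t) : t ^ α - s ^ α ≤ s ^ (α - 1) * (t - s) := by
  have hd : 0 ≤ t - s := by linarith
  have h1 : (0:ℝ) ≤ (t - s) / s := div_nonneg hd hs.le
  have hber : (1 + (t - s) / s) ^ α ≤ 1 + α * ((t - s) / s) :=
    rpow_one_add_le_one_add_mul_self (by linarith) hα.le hα1
  have ht' : t = s * (1 + (t - s) / s) := by field_simp; ring
  have h1' : (0:ℝ) ≤ 1 + (t - s) / s := by linarith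
  have htα : t ^ α = s ^ α * (1 + (t - s) / s) ^ α := by
    nth_rewrite 1 [ht']
    exact Real.mul_rpow hs.le h1'
  have hsα : 0 ≤ s ^ α := Real.rpow_nonneg hs.le α
  have hmul : s ^ α * (1 + (t - s) / s) ^ α ≤ s ^ α * (1 + α * ((t - s) / s)) :=
    mul_le_mul_of_nonneg_left hber hsα
  have hkey : s ^ α * (1 + α * ((t - s) / s)) = s ^ α + α * (s ^ α / s) * (t - s) := by
    field_simp
  have hpow : s ^ α / s = s ^ (α - 1) := by
    nth_rewrite 2 [← Real.rpow_one s]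
    rw [← Real.rpow_sub hs]
  have hαs : α * (s ^ (α - 1)) * (t - s) ≤ s ^ (α - 1) * (t - s) := by
    have h2 := Real.rpow_nonneg hs.le (α - 1)
    exact mul_le_mul_of_nonneg_right (mul_le_of_le_one_left h2 hα1) hd
  calc t ^ α - s ^ α ≤ s ^ α + α * (s ^ α / s) * (t - s) - s ^ α := by
        rw [← hkey, htα]; linarith [hmul]
    _ = α * (s ^ (α - 1)) * (t - s) := by rw [hpow]; ring
    _ ≤ s ^ (α - 1) * (t - s) := hαs

/-- Key estimate for the second term:
`G * s ^ lam * (1 / s ^ α - 1 / t ^ α) ≤ G * (t - s) ^ (lam - α)`. -/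
lemma key_second (α lam s t G : ℝ) (hα : 0 < α) (hαlam : α < lam) (hlam : lam < 1)
    (hG : 0 ≤ G) (hs : 0 < s) (hst : s < t) :
    G * s ^ lam * (1 / s ^ α - 1 / t ^ α) ≤ G * (t - s) ^ (lam - α) := by
  have ht : 0 < t := hs.trans hst
  have hd : 0 < t - s := by linarith
  have hsα : 0 < s ^ α := Real.rpow_pos_of_pos hs α
  have htα : 0 < t ^ α := Real.rpow_pos_of_pos ht α
  have hstα : s ^ α ≤ t ^ α := Real.rpow_le_rpow hs.le hst.le hα.le
  have hsl : 0 ≤ s ^ lam := Real.rpow_nonneg hs.le lam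
  rcases le_or_gt s (t - s) with hcase | hcase
  · -- s ≤ t - s : drop 1/t^α
    have h1 : 1 / s ^ α - 1 / t ^ α ≤ 1 / s ^ α := by
      have : 0 ≤ 1 / t ^ α := by positivity
      linarith
    have h2 : G * s ^ lam * (1 / s ^ α - 1 / t ^ α) ≤ G * s ^ lam * (1 / s ^ α) :=
      mul_le_mul_of_nonneg_left h1 (by positivity)
    have h3 : G * s ^ lam * (1 / s ^ α) = G * s ^ (lam - α) := by
      rw [Real.rpow_sub hs]; field_simp
    have h4 : s ^ (lam - α) ≤ (t - s) ^ (lam - α) :=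
      Real.rpow_le_rpow hs.le hcase (by linarith)
    calc G * s ^ lam * (1 / s ^ α - 1 / t ^ α) ≤ G * s ^ (lam - α) := by rw [← h3]; exact h2
      _ ≤ G * (t - s) ^ (lam - α) := mul_le_mul_of_nonneg_left h4 hG
  · -- t - s < s : use Bernoulli
    have hber : t ^ α - s ^ α ≤ s ^ (α - 1) * (t - s) :=
      rpow_sub_rpow_le α s t hα (by linarith) hs hst.le
    have hdiff : 1 / s ^ α - 1 / t ^ α = (t ^ α - s ^ α) / (s ^ α * t ^ α) := by
      field_simp
    have hnum : 0 ≤ t ^ α - s ^ α := by linarith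
    have hstep : (t ^ α - s ^ α) / (s ^ α * t ^ α)
        ≤ s ^ (α - 1) * (t - s) / (s ^ α * s ^ α) :=
      div_le_div₀ (by positivity) hber (by positivity)
        (mul_le_mul_of_nonneg_left hstα hsα.le)
    have h2 : G * s ^ lam * ((t ^ α - s ^ α) / (s ^ α * t ^ α))
        ≤ G * s ^ lam * (s ^ (α - 1) * (t - s) / (s ^ α * s ^ α)) :=
      mul_le_mul_of_nonneg_left hstep (by positivity)
    have halg : G * s ^ lam * (s ^ (α - 1) * (t - s) / (s ^ α * s ^ α))
        = G * (t - s) * s ^ (lam - α - 1) := by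
      have : s ^ lam * s ^ (α - 1) / (s ^ α * s ^ α) = s ^ (lam - α - 1) := by
        rw [← Real.rpow_add hs, ← Real.rpow_add hs, ← Real.rpow_sub hs]
        ring_nf
      rw [← this]; ring
    have hmono : s ^ (lam - α - 1) ≤ (t - s) ^ (lam - α - 1) :=
      Real.rpow_le_rpow_of_nonpos hd hcase.le (by linarith)
    have hfin : G * (t - s) * (t - s) ^ (lam - α - 1) = G * (t - s) ^ (lam - α) := by
      have : (t - s) * (t - s) ^ (lam - α - 1) = (t - s) ^ (lam - α) := by
        nth_rewrite 1 [← Real.rpow_one (t - s)]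
        rw [← Real.rpow_add hd]
        ring_nf
      rw [mul_assoc, this]
    calc G * s ^ lam * (1 / s ^ α - 1 / t ^ α)
        ≤ G * s ^ lam * (s ^ (α - 1) * (t - s) / (s ^ α * s ^ α)) := by
          rw [hdiff]; exact h2
      _ = G * (t - s) * s ^ (lam - α - 1) := halg
      _ ≤ G * (t - s) * (t - s) ^ (lam - α - 1) :=
          mul_le_mul_of_nonneg_left hmono (by positivity)
      _ = G * (t - s) ^ (lam - α) := hfin

theorem stmt_14 (T α lam : ℝ) (hT : 0 < T) (hα : 0 < α) (hαlam : α < lam)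
    (hlam : lam < 1) :
    ∀ G : ℝ, 0 ≤ G → ∀ g : ℝ → ℝ, g 0 = 0 →
      (∀ s ∈ Set.Icc (0:ℝ) T, ∀ t ∈ Set.Icc (0:ℝ) T, |g t - g s| ≤ G * |t - s| ^ lam) →
      (∀ t ∈ Set.Ioc (0:ℝ) T, |g t / t ^ α| ≤ G * t ^ (lam - α)) ∧
      (∀ s t : ℝ, 0 ≤ s → s ≤ t → t ≤ T →
        |g t / t ^ α - g s / s ^ α| ≤ 2 * G * (t - s) ^ (lam - α)) := by
  intro G hG g hg0 hld
  -- pointwise bound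
  have hbound : ∀ t, 0 ≤ t → t ≤ T → |g t| ≤ G * t ^ lam := by
    intro t ht htT
    have := hld 0 ⟨le_refl _, hT.le⟩ t ⟨ht, htT⟩
    simpa [hg0, abs_of_nonneg ht] using this
  have part1 : ∀ t, 0 < t → t ≤ T → |g t / t ^ α| ≤ G * t ^ (lam - α) := by
    intro t ht htT
    have htα : 0 < t ^ α := Real.rpow_pos_of_pos ht α
    rw [abs_div, abs_of_pos htα, div_le_iff₀ htα]
    calc |g t| ≤ G * t ^ lam := hbound t ht.le htT
      _ = G * t ^ (lam - α) * t ^ α := by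
        rw [mul_assoc, ← Real.rpow_add ht]; ring_nf
  constructor
  · intro t ht; exact part1 t ht.1 ht.2
  · intro s t hs hst htT
    rcases eq_or_lt_of_le hst with rfl | hst'
    · simp only [sub_self]
      rw [Real.zero_rpow (ne_of_gt (by linarith))]
      simp
    rcases eq_or_lt_of_le hs with rfl | hs'
    · -- s = 0
      rw [hg0]
      simp only [zero_div, sub_zero]
      have h1 := part1 t hst' htT
      have h2 : 0 ≤ G * t ^ (lam - α) :=
        mul_nonneg hG (Real.rpow_nonneg hst'.le _)
      linarith
    · -- 0 < s < t
      have ht : 0 < t := hs'.trans hst'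
      have hd : 0 < t - s := by linarith
      have hsα : 0 < s ^ α := Real.rpow_pos_of_pos hs' α
      have htα : 0 < t ^ α := Real.rpow_pos_of_pos ht α
      have hstα : s ^ α ≤ t ^ α := Real.rpow_le_rpow hs'.le hst'.le hα.le
      have hgs : |g s| ≤ G * s ^ lam := hbound s hs'.le (by linarith)
      have hgt : |g t - g s| ≤ G * (t - s) ^ lam := by
        have := hld s ⟨hs'.le, by linarith⟩ t ⟨ht.le, htT⟩
        rwa [abs_of_pos hd] at this
      -- decomposition
      have hdec : g t / t ^ α - g s / s ^ α
          = (g t - g s) / t ^ α + g s * (1 / t ^ α - 1 / s ^ α) := by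
        field_simp; ring
      have hinv : 0 ≤ 1 / s ^ α - 1 / t ^ α := by
        rw [sub_nonneg]
        exact one_div_le_one_div_of_le hsα hstα
      have habs : |g t / t ^ α - g s / s ^ α|
          ≤ |g t - g s| / t ^ α + |g s| * (1 / s ^ α - 1 / t ^ α) := by
        rw [hdec]
        refine (abs_add_le _ _).trans ?_
        gcongr
        · rw [abs_div, abs_of_pos htα]
        · rw [abs_mul]
          have : |1 / t ^ α - 1 / s ^ α| = 1 / s ^ α - 1 / t ^ α := by
            rw [abs_sub_comm, abs_of_nonneg hinv]
          rw [this]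
      -- first term
      have hterm1 : |g t - g s| / t ^ α ≤ G * (t - s) ^ (lam - α) := by
        have hdα : 0 < (t - s) ^ α := Real.rpow_pos_of_pos hd α
        have hdt : (t - s) ^ α ≤ t ^ α :=
          Real.rpow_le_rpow hd.le (by linarith) hα.le
        calc |g t - g s| / t ^ α ≤ (G * (t - s) ^ lam) / (t - s) ^ α :=
              div_le_div₀ (by positivity) hgt hdα hdt
          _ = G * (t - s) ^ (lam - α) := by
              rw [Real.rpow_sub hd]; ring
      -- second term
      have hterm2 : |g s| * (1 / s ^ α - 1 / t ^ α) ≤ G * (t - s) ^ (lam - α) := by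
        calc |g s| * (1 / s ^ α - 1 / t ^ α)
            ≤ G * s ^ lam * (1 / s ^ α - 1 / t ^ α) :=
              mul_le_mul_of_nonneg_right hgs hinv
          _ ≤ G * (t - s) ^ (lam - α) :=
              key_second α lam s t G hα hαlam hlam hG hs' hst'
      calc |g t / t ^ α - g s / s ^ α|
          ≤ |g t - g s| / t ^ α + |g s| * (1 / s ^ α - 1 / t ^ α) := habs
        _ ≤ G * (t - s) ^ (lam - α) + G * (t - s) ^ (lam - α) := add_le_add hterm1 hterm2
        _ = 2 * G * (t - s) ^ (lam - α) := by ring
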